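/- For any rate constants γ₁, γ₂, γ₃, γ₄ > 0, the series ζ = Σ_{x=1}^{∞} Π_{j=0}^{x−1} P₁(j)/P₋₁(j+1) is finite, where P₁(x) = (γ₁+γ₃x(x−1))/μ(x), P₋₁(x) = (γ₂x+γ₄x(x−1)(x−2))/μ(x) and μ(x) = γ₁+γ₂x+γ₃x(x−1)+γ₄x(x−1)(x−2) are the transition probabilities of the embedded Schlögl chain. Equivalently, Σ_{x=1}^{∞} (1/x!)·Π_{j=0}^{x−1} [ (γ₁+γ₃j(j−1))/(γ₂+γ₄j(j−1)) · μ(j+1)/μ(j) ] < ∞. -/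
import Mathlib


/-- Total propensity of the Schlögl model. -/
noncomputable def schloeglMu (γ₁ γ₂ γ₃ γ₄ : ℝ) (x : ℕ) : ℝ :=
  γ₁ + γ₂ * x + γ₃ * x * ((x : ℝ) - 1) + γ₄ * x * ((x : ℝ) - 1) * ((x : ℝ) - 2)

/-- Up-transition probability of the embedded Schlögl chain. -/
noncomputable def schloeglP1 (γ₁ γ₂ γ₃ γ₄ : ℝ) (x : ℕ) : ℝ :=
  (γ₁ + γ₃ * x * ((x : ℝ) - 1)) / schloeglMu γ₁ γ₂ γ₃ γ₄ x

/-- Down-transition probability of the embedded Schlögl chain. -/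
noncomputable def schloeglPm1 (γ₁ γ₂ γ₃ γ₄ : ℝ) (x : ℕ) : ℝ :=
  (γ₂ * x + γ₄ * x * ((x : ℝ) - 1) * ((x : ℝ) - 2)) / schloeglMu γ₁ γ₂ γ₃ γ₄ x

lemma schloegl_aux_nn1 (n : ℕ) : 0 ≤ (n : ℝ) * ((n : ℝ) - 1) := by
  rcases n with _ | m
  · simp
  · have : (0:ℝ) ≤ (m : ℝ) := m.cast_nonneg
    push_cast
    nlinarith

lemma schloegl_aux_nn2 (n : ℕ) : 0 ≤ (n : ℝ) * ((n : ℝ) - 1) * ((n : ℝ) - 2) := by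
  rcases n with _ | _ | m
  · simp
  · norm_num
  · have hm : (0:ℝ) ≤ (m : ℝ) := m.cast_nonneg
    push_cast
    nlinarith [mul_nonneg (mul_nonneg (by linarith : (0:ℝ) ≤ (m:ℝ)+2)
      (by linarith : (0:ℝ) ≤ (m:ℝ)+1)) hm]

lemma schloeglMu_pos {γ₁ γ₂ γ₃ γ₄ : ℝ}
    (hγ₁ : 0 < γ₁) (hγ₂ : 0 < γ₂) (hγ₃ : 0 < γ₃) (hγ₄ : 0 < γ₄) (x : ℕ) :
    0 < schloeglMu γ₁ γ₂ γ₃ γ₄ x := by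
  have h1 := schloegl_aux_nn1 x
  have h2 := schloegl_aux_nn2 x
  have h0 : (0:ℝ) ≤ (x : ℝ) := x.cast_nonneg
  unfold schloeglMu
  nlinarith [mul_nonneg hγ₃.le h1, mul_nonneg hγ₄.le h2, mul_nonneg hγ₂.le h0]

/-- Summability of the second (factorial) form of the series. -/
lemma schloegl_aux_summable (γ₁ γ₂ γ₃ γ₄ : ℝ)
    (hγ₁ : 0 < γ₁) (hγ₂ : 0 < γ₂) (hγ₃ : 0 < γ₃) (hγ₄ : 0 < γ₄) :
    Summable (fun x : ℕ => (1 / (Nat.factorial (x + 1) : ℝ)) *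
      ∏ j ∈ Finset.range (x + 1),
        ((γ₁ + γ₃ * j * ((j : ℝ) - 1)) / (γ₂ + γ₄ * j * ((j : ℝ) - 1))) *
          (schloeglMu γ₁ γ₂ γ₃ γ₄ (j + 1) / schloeglMu γ₁ γ₂ γ₃ γ₄ j)) := by
  have hμ := schloeglMu_pos hγ₁ hγ₂ hγ₃ hγ₄
  set c : ℕ → ℝ := fun j =>
    ((γ₁ + γ₃ * j * ((j : ℝ) - 1)) / (γ₂ + γ₄ * j * ((j : ℝ) - 1))) *
      (schloeglMu γ₁ γ₂ γ₃ γ₄ (j + 1) / schloeglMu γ₁ γ₂ γ₃ γ₄ j) with hc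
  set b : ℕ → ℝ := fun x => (1 / (Nat.factorial (x + 1) : ℝ)) *
      ∏ j ∈ Finset.range (x + 1), c j with hbdef
  have hdpos : ∀ j : ℕ, 0 < γ₂ + γ₄ * j * ((j : ℝ) - 1) := by
    intro j
    have := schloegl_aux_nn1 j
    nlinarith [mul_nonneg hγ₄.le (schloegl_aux_nn1 j)]
  have hcnn : ∀ j : ℕ, 0 ≤ c j := by
    intro j
    apply mul_nonneg
    · apply div_nonneg _ (hdpos j).le
      nlinarith [mul_nonneg hγ₃.le (schloegl_aux_nn1 j)]
    · exact div_nonneg (hμ (j+1)).le (hμ j).le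
  have hbnn : ∀ x : ℕ, 0 ≤ b x := by
    intro x
    apply mul_nonneg (by positivity)
    exact Finset.prod_nonneg fun j _ => hcnn j
  set K : ℝ := γ₁ / γ₂ + γ₃ / γ₄ with hK
  have hKpos : 0 < K := by positivity
  apply summable_of_ratio_norm_eventually_le (r := 1/2) (by norm_num)
  rw [Filter.eventually_atTop]
  refine ⟨max 2 (Nat.ceil (8 * K)), fun n hn => ?_⟩
  have hn2 : (2 : ℝ) ≤ (n : ℝ) := by
    have : (2 : ℕ) ≤ n := le_trans (le_max_left _ _) hn
    exact_mod_cast this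
  have hnK : 8 * K ≤ (n : ℝ) :=
    (Nat.ceil_le).mp (le_trans (le_max_right _ _) hn)
  have hn0 : (0:ℝ) ≤ (n : ℝ) := n.cast_nonneg
  -- step equality: b (n+1) = b n * c (n+1) / (n+2)
  have hfac : ((Nat.factorial (n+1) : ℝ)) ≠ 0 := by
    exact_mod_cast (Nat.factorial_ne_zero (n+1))
  have hstep : b (n+1) = b n * c (n+1) / ((n : ℝ) + 2) := by
    show (1 / (Nat.factorial (n+1+1) : ℝ)) * ∏ j ∈ Finset.range (n+1+1), c j
        = (1 / (Nat.factorial (n+1) : ℝ)) * (∏ j ∈ Finset.range (n+1), c j) * c (n+1)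
          / ((n : ℝ) + 2)
    rw [Finset.prod_range_succ, Nat.factorial_succ (n+1)]
    push_cast
    field_simp
    all_goals first
      | ring1
      | (push_cast; ring1)
      | (left; ring1)
      | (left; push_cast; ring1)
  -- bound A ≤ K
  have hA : (γ₁ + γ₃ * (↑(n+1) : ℝ) * ((↑(n+1) : ℝ) - 1)) /
      (γ₂ + γ₄ * (↑(n+1) : ℝ) * ((↑(n+1) : ℝ) - 1)) ≤ K := by
    rw [div_le_iff₀ (hdpos (n+1)), hK]
    have ht : (0:ℝ) ≤ (↑(n+1) : ℝ) * ((↑(n+1) : ℝ) - 1) := schloegl_aux_nn1 (n+1)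
    push_cast at ht ⊢
    have e1 : γ₁ / γ₂ * γ₂ = γ₁ := div_mul_cancel₀ _ hγ₂.ne'
    have e2 : γ₃ / γ₄ * γ₄ = γ₃ := div_mul_cancel₀ _ hγ₄.ne'
    nlinarith [mul_nonneg (mul_nonneg (div_nonneg hγ₁.le hγ₂.le) hγ₄.le) ht,
      mul_nonneg (div_nonneg hγ₃.le hγ₄.le) hγ₂.le]
  -- bound B ≤ 4
  have hB : schloeglMu γ₁ γ₂ γ₃ γ₄ (n+2) / schloeglMu γ₁ γ₂ γ₃ γ₄ (n+1) ≤ 4 := by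
    rw [div_le_iff₀ (hμ (n+1))]
    unfold schloeglMu
    push_cast
    nlinarith [mul_nonneg (mul_nonneg (mul_nonneg hγ₄.le hn0)
        (by linarith : (0:ℝ) ≤ (n:ℝ) + 1)) (by linarith : (0:ℝ) ≤ (n:ℝ) - 2),
      mul_nonneg (mul_nonneg hγ₃.le (by linarith : (0:ℝ) ≤ (n:ℝ) + 1))
        (by linarith : (0:ℝ) ≤ 3 * (n:ℝ) - 2),
      mul_nonneg hγ₂.le hn0]
  have hBnn : 0 ≤ schloeglMu γ₁ γ₂ γ₃ γ₄ (n+2) / schloeglMu γ₁ γ₂ γ₃ γ₄ (n+1) :=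
    div_nonneg (hμ (n+2)).le (hμ (n+1)).le
  have hc4K : c (n+1) ≤ 4 * K := by
    have : c (n+1) = ((γ₁ + γ₃ * (↑(n+1) : ℝ) * ((↑(n+1) : ℝ) - 1)) /
        (γ₂ + γ₄ * (↑(n+1) : ℝ) * ((↑(n+1) : ℝ) - 1))) *
        (schloeglMu γ₁ γ₂ γ₃ γ₄ (n+2) / schloeglMu γ₁ γ₂ γ₃ γ₄ (n+1)) := rfl
    rw [this]
    calc _ ≤ K * 4 := mul_le_mul hA hB hBnn hKpos.le
    _ = 4 * K := by ring
  rw [Real.norm_of_nonneg (hbnn (n+1)), Real.norm_of_nonneg (hbnn n), hstep,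
    div_le_iff₀ (by linarith : (0:ℝ) < (n:ℝ) + 2)]
  nlinarith [mul_le_mul_of_nonneg_left hc4K (hbnn n),
    mul_le_mul_of_nonneg_left (show 8 * K ≤ (n:ℝ) + 2 by linarith) (hbnn n)]

/-- For any rate constants `γ₁,γ₂,γ₃,γ₄ > 0` the series
`ζ = Σ_{x≥1} Π_{j=0}^{x−1} P₁(j)/P₋₁(j+1)` of the embedded Schlögl chain is finite;
equivalently `Σ_{x≥1} (1/x!)·Π_{j=0}^{x−1} [(γ₁+γ₃j(j−1))/(γ₂+γ₄j(j−1)) · μ(j+1)/μ(j)]`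
is finite. -/
theorem stmt19 (γ₁ γ₂ γ₃ γ₄ : ℝ)
    (hγ₁ : 0 < γ₁) (hγ₂ : 0 < γ₂) (hγ₃ : 0 < γ₃) (hγ₄ : 0 < γ₄) :
    Summable (fun x : ℕ => ∏ j ∈ Finset.range (x + 1),
      schloeglP1 γ₁ γ₂ γ₃ γ₄ j / schloeglPm1 γ₁ γ₂ γ₃ γ₄ (j + 1)) ∧
    Summable (fun x : ℕ => (1 / (Nat.factorial (x + 1) : ℝ)) *
      ∏ j ∈ Finset.range (x + 1),
        ((γ₁ + γ₃ * j * ((j : ℝ) - 1)) / (γ₂ + γ₄ * j * ((j : ℝ) - 1))) *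
          (schloeglMu γ₁ γ₂ γ₃ γ₄ (j + 1) / schloeglMu γ₁ γ₂ γ₃ γ₄ j)) := by
  have hsum := schloegl_aux_summable γ₁ γ₂ γ₃ γ₄ hγ₁ hγ₂ hγ₃ hγ₄
  have hμ := schloeglMu_pos hγ₁ hγ₂ hγ₃ hγ₄
  have hdpos : ∀ j : ℕ, 0 < γ₂ + γ₄ * j * ((j : ℝ) - 1) := by
    intro j
    nlinarith [mul_nonneg hγ₄.le (schloegl_aux_nn1 j)]
  have hfactor : ∀ j : ℕ,
      schloeglP1 γ₁ γ₂ γ₃ γ₄ j / schloeglPm1 γ₁ γ₂ γ₃ γ₄ (j + 1) =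
      (1 / ((j : ℝ) + 1)) *
        (((γ₁ + γ₃ * j * ((j : ℝ) - 1)) / (γ₂ + γ₄ * j * ((j : ℝ) - 1))) *
          (schloeglMu γ₁ γ₂ γ₃ γ₄ (j + 1) / schloeglMu γ₁ γ₂ γ₃ γ₄ j)) := by
    intro j
    have hμj := hμ j
    have hμj1 := hμ (j+1)
    have hd := hdpos j
    have hj1 : (0:ℝ) < (j : ℝ) + 1 := by positivity
    have hnum : γ₂ * (↑(j+1) : ℝ) + γ₄ * (↑(j+1) : ℝ) * ((↑(j+1) : ℝ) - 1) *
        ((↑(j+1) : ℝ) - 2) = ((j : ℝ) + 1) * (γ₂ + γ₄ * j * ((j : ℝ) - 1)) := by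
      push_cast; ring
    unfold schloeglP1 schloeglPm1
    rw [hnum]
    field_simp
    all_goals first
      | ring1
      | (push_cast; ring1)
      | (left; ring1)
      | (left; push_cast; ring1)
  constructor
  · apply hsum.congr
    intro x
    have hp : (∏ j ∈ Finset.range (x+1), ((j:ℝ)+1)) = (Nat.factorial (x+1) : ℝ) := by
      exact_mod_cast congrArg (Nat.cast : ℕ → ℝ)
        (Finset.prod_range_add_one_eq_factorial (x+1))
    have h1p : (∏ j ∈ Finset.range (x+1), (1/((j:ℝ)+1)))
        = 1 / (Nat.factorial (x+1) : ℝ) := by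
      rw [Finset.prod_div_distrib, Finset.prod_const_one, hp]
    calc (1 / (Nat.factorial (x + 1) : ℝ)) *
          ∏ j ∈ Finset.range (x + 1),
            ((γ₁ + γ₃ * j * ((j : ℝ) - 1)) / (γ₂ + γ₄ * j * ((j : ℝ) - 1))) *
              (schloeglMu γ₁ γ₂ γ₃ γ₄ (j + 1) / schloeglMu γ₁ γ₂ γ₃ γ₄ j)
        = (∏ j ∈ Finset.range (x+1), (1/((j:ℝ)+1))) *
          ∏ j ∈ Finset.range (x + 1),
            ((γ₁ + γ₃ * j * ((j : ℝ) - 1)) / (γ₂ + γ₄ * j * ((j : ℝ) - 1))) *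
              (schloeglMu γ₁ γ₂ γ₃ γ₄ (j + 1) / schloeglMu γ₁ γ₂ γ₃ γ₄ j) := by
          rw [h1p]
      _ = ∏ j ∈ Finset.range (x + 1), (1/((j:ℝ)+1)) *
            (((γ₁ + γ₃ * j * ((j : ℝ) - 1)) / (γ₂ + γ₄ * j * ((j : ℝ) - 1))) *
              (schloeglMu γ₁ γ₂ γ₃ γ₄ (j + 1) / schloeglMu γ₁ γ₂ γ₃ γ₄ j)) :=
          Finset.prod_mul_distrib.symm
      _ = ∏ j ∈ Finset.range (x + 1),
            schloeglP1 γ₁ γ₂ γ₃ γ₄ j / schloeglPm1 γ₁ γ₂ γ₃ γ₄ (j + 1) :=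
          Finset.prod_congr rfl fun j _ => (hfactor j).symm
  · exact hsum
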